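/- arXiv:1110.0517 — 6 statements merged into one kernel-verified Lean document; each statement's English description precedes it below -/
import Mathlib

section
/- If for each vertex x in G there is a subset L(x) of the open (ε−1)-neighborhood of x that covers all vertex pairs (x,y) with d(x,y)=ε (i.e., for each such pair there is a vertex z in L(x) with d(x,y)=d(x,z)+d(z,y)), then the union of all L(x) over x in V is a gate-vertex set of G: for every pair u,v with ε ≤ d(u,v) < ∞ there exists a sequence u, v₁, …, v_k, v with all vᵢ in the union, each consecutive pair at distance < ε, and the sum of consecutive distances equal to d(u,v). -/
/-- Sum of shortest-path distances between consecutive elements of a list. -/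
noncomputable def chainSum {V : Type*} (G : SimpleGraph V) : List V → ℕ
  | a :: b :: rest => G.dist a b + chainSum G (b :: rest)
  | _ => 0

/-- `S` is a gate-vertex set of `G` with locality parameter `ε`: for every non-local
pair `u,v` (connected and `ε ≤ d(u,v)`), there is a sequence `u, v₁, …, v_k, v` with all
`vᵢ ∈ S`, each consecutive pair at distance `< ε`, whose consecutive distances sum to `d(u,v)`. -/
def IsGateSet {V : Type*} (G : SimpleGraph V) (ε : ℕ) (S : Set V) : Prop :=
  ∀ u v : V, G.Reachable u v → ε ≤ G.dist u v →
    ∃ l : List V, (∀ x ∈ l, x ∈ S) ∧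
      List.Chain' (fun a b => G.dist a b < ε) (u :: (l ++ [v])) ∧
      chainSum G (u :: (l ++ [v])) = G.dist u v

private lemma dist_tri {V : Type*} {G : SimpleGraph V} {u v w : V}
    (h1 : G.Reachable u v) (h2 : G.Reachable v w) :
    G.dist u w ≤ G.dist u v + G.dist v w := by
  obtain ⟨p, hp⟩ := h1.exists_walk_length_eq_dist
  obtain ⟨q, hq⟩ := h2.exists_walk_length_eq_dist
  rw [← hp, ← hq, ← SimpleGraph.Walk.length_append]
  apply SimpleGraph.dist_le

/-- For any `k ≤ d(u,v)` there is a vertex `y` at distance `k` from `u` on a geodesic. -/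
private lemma exists_mid {V : Type*} {G : SimpleGraph V} {u v : V}
    (h : G.Reachable u v) :
    ∀ k, k ≤ G.dist u v →
      ∃ y, G.Reachable u y ∧ G.Reachable y v ∧ G.dist u y = k ∧
        G.dist u v = G.dist u y + G.dist y v := by
  intro k
  induction k with
  | zero =>
    intro _
    exact ⟨u, SimpleGraph.Reachable.refl u, h, by simp [SimpleGraph.dist_self]⟩
  | succ k ih =>
    intro hk
    obtain ⟨y, huy, hyv, hky, hsum⟩ := ih (Nat.le_of_succ_le hk)
    have hyvpos : 0 < G.dist y v := by omega
    obtain ⟨p, hp⟩ := hyv.exists_walk_length_eq_dist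
    cases p with
    | nil => simp [SimpleGraph.dist_self] at hp; omega
    | cons ha q =>
      rename_i y'
      have hy' : G.Reachable y' v := ⟨q⟩
      have hyy' : G.Reachable y y' := ⟨ha.toWalk⟩
      have hqlen : G.dist y' v ≤ G.dist y v - 1 := by
        have := SimpleGraph.dist_le q
        simp [SimpleGraph.Walk.length_cons] at hp
        omega
      have huy' : G.Reachable u y' := huy.trans hyy'
      have h1 : G.dist u y' ≤ k + 1 := by
        have := dist_tri huy hyy'
        have hd1 : G.dist y y' ≤ 1 := by
          have := SimpleGraph.dist_le ha.toWalk
          simpa using this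
        omega
      have h2 : G.dist u v ≤ G.dist u y' + G.dist y' v := dist_tri huy' hy'
      have h3 : k + 1 ≤ G.dist u y' := by omega
      have h4 : G.dist u y' = k + 1 := le_antisymm h1 h3
      refine ⟨y', huy', hy', h4, ?_⟩
      have := dist_tri huy' hy'
      have h5 : G.dist u v ≥ G.dist u y' + G.dist y' v := by
        -- dist y' v ≥ dist u v - (k+1) by triangle through y'? use h2
        omega
      omega

/-- **Sufficient local condition.** If each vertex `x` has a set `L x` inside its open
`(ε−1)`-neighborhood covering all pairs `(x,y)` with `d(x,y) = ε`, then `⋃ x, L x`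
is a gate-vertex set of `G`. -/
theorem union_local_covers_isGateSet {V : Type*} [Fintype V] (G : SimpleGraph V)
    (ε : ℕ) (hε : 0 < ε) (L : V → Set V)
    (hL : ∀ x, ∀ z ∈ L x, 0 < G.dist x z ∧ G.dist x z < ε)
    (hcov : ∀ x y : V, G.dist x y = ε →
      ∃ z ∈ L x, G.dist x y = G.dist x z + G.dist z y) :
    IsGateSet G ε (⋃ x, L x) := by
  suffices H : ∀ n u v, G.dist u v = n → G.Reachable u v → ε ≤ G.dist u v →
      ∃ l : List V, (∀ x ∈ l, x ∈ ⋃ x, L x) ∧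
        List.Chain' (fun a b => G.dist a b < ε) (u :: (l ++ [v])) ∧
        chainSum G (u :: (l ++ [v])) = G.dist u v by
    exact fun u v h1 h2 => H _ u v rfl h1 h2
  intro n
  induction n using Nat.strong_induction_on with
  | _ n IH =>
    intro u v hn hr hge
    obtain ⟨y, huy, hyv, hyε, hsum⟩ := exists_mid hr ε hge
    obtain ⟨z, hzL, hzsum⟩ := hcov u y hyε
    obtain ⟨hzpos, hzlt⟩ := hL u z hzL
    have huz : G.Reachable u z := SimpleGraph.Reachable.of_dist_ne_zero (by omega)
    have hzv : G.Reachable z v := huz.symm.trans hr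
    have hzy : G.Reachable z y := huz.symm.trans huy
    have ht1 : G.dist z v ≤ G.dist z y + G.dist y v := dist_tri hzy hyv
    have ht2 : G.dist u v ≤ G.dist u z + G.dist z v := dist_tri huz hzv
    have hkey : G.dist u v = G.dist u z + G.dist z v := by omega
    have hzS : z ∈ ⋃ x, L x := Set.mem_iUnion.mpr ⟨u, hzL⟩
    by_cases hc : G.dist z v < ε
    · refine ⟨[z], by simpa using hzS, ?_, ?_⟩
      · simp [List.Chain', List.isChain_cons_cons, hzlt, hc]
      · simp only [List.cons_append, List.singleton_append, chainSum]
        simp [chainSum, hkey]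
    · push_neg at hc
      have hlt : G.dist z v < n := by omega
      obtain ⟨l, hlS, hchain, hcs⟩ := IH (G.dist z v) hlt z v rfl hzv hc
      refine ⟨z :: l, ?_, ?_, ?_⟩
      · intro x hx
        rcases List.mem_cons.mp hx with h | h
        · exact h ▸ hzS
        · exact hlS x h
      · simpa [List.Chain', List.isChain_cons] using And.intro hzlt hchain
      · have : chainSum G (u :: ((z :: l) ++ [v])) =
            G.dist u z + chainSum G (z :: (l ++ [v])) := by
          simp [chainSum]
        rw [this, hcs, hkey]
end

section
/- Given a finite unweighted undirected graph G and integer k ≥ 1, if V* ⊆ V is a k-skip cover, then V* is a gate-vertex set of G with locality parameter ε = k+1. -/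
/-- `S` is a `k`-skip cover of `G`: for every pair of connected vertices there is a
shortest path between them such that every `k` consecutive vertices on the path
contain at least one vertex of `S`. -/
def IsKSkipCover {V : Type*} (G : SimpleGraph V) (k : ℕ) (S : Set V) : Prop :=
  ∀ u v : V, G.Reachable u v →
    ∃ p : G.Walk u v, p.length = G.dist u v ∧
      ∀ l₁ l₂ l₃ : List V, p.support = l₁ ++ l₂ ++ l₃ → l₂.length = k →
        ∃ x ∈ l₂, x ∈ S

private lemma aux_dist_take {V : Type*} (G : SimpleGraph V) :
    ∀ {u v : V} (p : G.Walk u v) (n : ℕ) (x : V),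
      x ∈ p.support.take (n + 1) → G.dist u x ≤ n := by
  classical
  intro u v p
  induction p with
  | nil =>
    intro n x hx
    simp only [SimpleGraph.Walk.support_nil] at hx
    simp at hx
    subst hx
    simp [SimpleGraph.dist_self]
  | @cons a b c h q ih =>
    intro n x hx
    rw [SimpleGraph.Walk.support_cons, List.take_succ_cons] at hx
    rcases List.mem_cons.mp hx with rfl | hx'
    · simp [SimpleGraph.dist_self]
    · match n with
      | 0 => simp at hx'
      | m + 1 =>
        have hxs : x ∈ q.support := List.take_subset _ _ hx'
        have hm : G.dist b x ≤ m := ih m x hx'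
        have hr : G.Reachable b x := ⟨q.takeUntil x hxs⟩
        obtain ⟨r, hr'⟩ := hr.exists_walk_length_eq_dist
        have := SimpleGraph.dist_le (SimpleGraph.Walk.cons h r)
        simp only [SimpleGraph.Walk.length_cons, hr'] at this
        omega

private lemma aux_split {V : Type*} (G : SimpleGraph V) {u v : V} (p : G.Walk u v)
    {x : V} (hx : x ∈ p.support) : G.dist u x + G.dist x v ≤ p.length := by
  classical
  have h1 := SimpleGraph.dist_le (p.takeUntil x hx)
  have h2 := SimpleGraph.dist_le (p.dropUntil x hx)
  have h3 := congr_arg SimpleGraph.Walk.length (p.take_spec hx)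
  rw [SimpleGraph.Walk.length_append] at h3
  omega

private lemma aux_tri {V : Type*} (G : SimpleGraph V) {u x v : V}
    (h1 : G.Reachable u x) (h2 : G.Reachable x v) :
    G.dist u v ≤ G.dist u x + G.dist x v := by
  obtain ⟨p, hp⟩ := h1.exists_walk_length_eq_dist
  obtain ⟨q, hq⟩ := h2.exists_walk_length_eq_dist
  have := SimpleGraph.dist_le (p.append q)
  rwa [SimpleGraph.Walk.length_append, hp, hq] at this

private lemma aux_main {V : Type*} (G : SimpleGraph V) (k : ℕ) (hk : 1 ≤ k)
    (S : Set V) (hS : IsKSkipCover G k S) :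
    ∀ d : ℕ, ∀ u v : V, G.Reachable u v → G.dist u v = d →
      ∃ l : List V, (∀ x ∈ l, x ∈ S) ∧
        List.Chain' (fun a b => G.dist a b < k + 1) (u :: (l ++ [v])) ∧
        chainSum G (u :: (l ++ [v])) = G.dist u v := by
  classical
  intro d
  induction d using Nat.strong_induction_on with
  | _ d IH =>
    intro u v hr hd
    by_cases hsmall : d ≤ k
    · refine ⟨[], by simp, ?_, ?_⟩
      · simp only [List.nil_append]
        refine List.isChain_cons_cons.mpr ⟨?_, List.isChain_singleton _⟩
        omega
      · simp [chainSum, hd]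
    · push_neg at hsmall
      obtain ⟨p, hplen, hpwin⟩ := hS u v hr
      have hsup : p.support = u :: p.support.tail := p.support_eq_cons
      have htail : p.support.tail.length = d := by
        have := SimpleGraph.Walk.length_support p
        rw [hsup] at this
        simp only [List.length_cons] at this
        omega
      obtain ⟨x, hxwin, hxS⟩ := hpwin [u] (p.support.tail.take k) (p.support.tail.drop k)
        (by rw [List.append_assoc, List.take_append_drop]; exact hsup) (by rw [List.length_take]; omega)
      have hxtail : x ∈ p.support.tail := List.take_subset _ _ hxwin
      have hxsup : x ∈ p.support := by rw [hsup]; exact List.mem_cons_of_mem _ hxtail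
      have hdux : G.dist u x ≤ k := by
        apply aux_dist_take G p k x
        rw [hsup, List.take_succ_cons]
        exact List.mem_cons_of_mem _ hxwin
      have hxne : x ≠ u := by
        have hpath : p.IsPath := p.isPath_of_length_eq_dist (by rw [hplen, hd])
        have hnd := hpath.support_nodup
        rw [hsup] at hnd
        intro h; subst h
        exact (List.nodup_cons.mp hnd).1 hxtail
      have hrux : G.Reachable u x := ⟨p.takeUntil x hxsup⟩
      have hrxv : G.Reachable x v := ⟨p.dropUntil x hxsup⟩
      have hpos : 1 ≤ G.dist u x := by
        rcases Nat.eq_zero_or_pos (G.dist u x) with h0 | h0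
        · exact absurd (hrux.dist_eq_zero_iff.mp h0).symm hxne
        · omega
      have hle : G.dist u x + G.dist x v ≤ d := by
        have := aux_split G p hxsup
        omega
      have hge : d ≤ G.dist u x + G.dist x v := by
        have := aux_tri G hrux hrxv
        omega
      have heq : G.dist u x + G.dist x v = d := le_antisymm hle hge
      have hlt : G.dist x v < d := by omega
      obtain ⟨l', hl'S, hl'chain, hl'sum⟩ := IH (G.dist x v) hlt x v hrxv rfl
      refine ⟨x :: l', ?_, ?_, ?_⟩
      · intro y hy
        rcases List.mem_cons.mp hy with rfl | hy'
        · exact hxS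
        · exact hl'S y hy'
      · have : u :: ((x :: l') ++ [v]) = u :: x :: (l' ++ [v]) := by simp
        rw [this]
        refine List.isChain_cons_cons.mpr ⟨by omega, hl'chain⟩
      · have h2 : u :: ((x :: l') ++ [v]) = u :: x :: (l' ++ [v]) := by simp
        rw [h2]
        have : chainSum G (u :: x :: (l' ++ [v])) =
            G.dist u x + chainSum G (x :: (l' ++ [v])) := by
          simp [chainSum]
        rw [this, hl'sum, hd]
        omega

/-- Every `k`-skip cover of `G` (`k ≥ 1`) is a gate-vertex set of `G` with locality
parameter `ε = k + 1`. -/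
theorem kSkipCover_isGateSet {V : Type*} [Fintype V] (G : SimpleGraph V)
    (k : ℕ) (hk : 1 ≤ k) (S : Set V) (hS : IsKSkipCover G k S) :
    IsGateSet G (k + 1) S := by
  intro u v hr _
  exact aux_main G k hk S hS (G.dist u v) u v hr rfl
end

section
/- Every finite unweighted undirected graph G=(V,E) admits a unique shortest path system: a collection P containing, for each pair of connected vertices, exactly one shortest path between them, such that whenever two vertices u,v both lie (in that order along the paths) on two paths of P, the subpaths of those two paths between u and v are identical. -/
open SimpleGraph

private lemma walk_eq_of_support_eq' {V : Type*} {G : SimpleGraph V} {v : V} :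
    ∀ {u : V} (p q : G.Walk u v), p.support = q.support → p = q := by
  intro u p
  induction p with
  | nil =>
    intro q h
    cases q with
    | nil => rfl
    | cons hadj' q' =>
      exfalso
      have := congrArg List.length h
      simp [Walk.support_cons] at this
  | cons hadj p ih =>
    intro q h
    cases q with
    | nil =>
      exfalso
      have := congrArg List.length h
      simp [Walk.support_cons] at this
    | cons hadj' q' =>
      rw [Walk.support_cons, Walk.support_cons] at h
      have h' := List.tail_eq_of_cons_eq h
      have h2 := h'
      rw [Walk.support_eq_cons p, Walk.support_eq_cons q'] at h2
      have hw := List.head_eq_of_cons_eq h2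
      subst hw
      rw [ih q' h']

private lemma lex_append_prefix {α : Type*} [LinearOrder α] (l : List α) {a b : List α}
    (h : List.Lex (· < ·) a b) : List.Lex (· < ·) (l ++ a) (l ++ b) := by
  induction l with
  | nil => exact h
  | cons x l ih => exact List.Lex.cons ih

private lemma lex_append_of_length_eq {α : Type*} [LinearOrder α] :
    ∀ {a b : List α}, List.Lex (· < ·) a b → a.length = b.length →
      ∀ (x y : List α), List.Lex (· < ·) (a ++ x) (b ++ y) := by
  intro a b h
  induction h with
  | nil => intro hl; simp at hl
  | @rel a as b bs hab => intro _ x y; exact List.Lex.rel hab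
  | @cons a as bs h ih =>
    intro hl x y
    exact List.Lex.cons (ih (by simpa using hl) x y)

/-- **Existence of a unique shortest path system.** Every finite graph admits a choice
`P` of one shortest path (walk of length `d(u,v)`) for each pair of connected vertices,
which is consistent: whenever vertices `u, w` appear (in that order) on two chosen
paths, the subpaths of the two paths between `u` and `w` coincide. -/
theorem exists_unique_shortest_path_system
    {V : Type*} [Fintype V] [DecidableEq V] (G : SimpleGraph V) :
    ∃ P : ∀ u v : V, G.Reachable u v → G.Walk u v,
      (∀ u v h, (P u v h).length = G.dist u v) ∧
      (∀ (a₁ b₁ : V) (h₁ : G.Reachable a₁ b₁) (a₂ b₂ : V) (h₂ : G.Reachable a₂ b₂)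
        (u w : V)
        (hu₁ : u ∈ (P a₁ b₁ h₁).support)
        (hw₁ : w ∈ ((P a₁ b₁ h₁).dropUntil u hu₁).support)
        (hu₂ : u ∈ (P a₂ b₂ h₂).support)
        (hw₂ : w ∈ ((P a₂ b₂ h₂).dropUntil u hu₂).support),
        ((P a₁ b₁ h₁).dropUntil u hu₁).takeUntil w hw₁ =
          ((P a₂ b₂ h₂).dropUntil u hu₂).takeUntil w hw₂) := by
  classical
  letI : LinearOrder V := LinearOrder.lift' (Fintype.equivFin V) (Equiv.injective _)
  -- existence of a lexicographically minimal shortest walk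
  have key : ∀ u v : V, G.Reachable u v → ∃ p : G.Walk u v,
      p.length = G.dist u v ∧
      ∀ q : G.Walk u v, q.length = G.dist u v → p.support ≤ q.support := by
    intro u v h
    have hne : ({p : G.Walk u v | p.length = G.dist u v}).Nonempty :=
      h.exists_walk_length_eq_dist
    have hfin : ({p : G.Walk u v | p.length = G.dist u v}).Finite := by
      rw [← coe_finsetWalkLength_eq]
      exact (G.finsetWalkLength _ u v).finite_toSet
    obtain ⟨p, hp, hmin⟩ := Set.exists_min_image _ (fun p => p.support) hfin hne
    exact ⟨p, hp, hmin⟩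
  set P : ∀ u v : V, G.Reachable u v → G.Walk u v :=
    fun u v h => (key u v h).choose with hP
  have Plen : ∀ u v h, (P u v h).length = G.dist u v := fun u v h => (key u v h).choose_spec.1
  have Pmin : ∀ u v h (q : G.Walk u v), q.length = G.dist u v →
      (P u v h).support ≤ q.support := fun u v h => (key u v h).choose_spec.2
  -- the central claim: the subwalk of a chosen walk is the chosen walk of its endpoints
  have main : ∀ (a b : V) (h : G.Reachable a b) (u w : V)
      (hu : u ∈ (P a b h).support) (hw : w ∈ ((P a b h).dropUntil u hu).support)
      (hr : G.Reachable u w),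
      ((P a b h).dropUntil u hu).takeUntil w hw = P u w hr := by
    intro a b h u w hu hw hr
    set p := P a b h with hp
    set t₁ := p.takeUntil u hu with ht₁
    set m := p.dropUntil u hu with hm
    set q := m.takeUntil w hw with hq
    set t₂ := m.dropUntil w hw with ht₂
    have hspec1 : t₁.append m = p := p.take_spec hu
    have hspec2 : q.append t₂ = m := m.take_spec hw
    have hlenp : p.length = G.dist a b := Plen a b h
    -- length of q equals dist u w
    have hqlen : q.length = G.dist u w := by
      have hle : G.dist u w ≤ q.length := SimpleGraph.dist_le q
      rcases lt_or_eq_of_le hle with hlt | heq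
      · exfalso
        obtain ⟨q', hq'⟩ := hr.exists_walk_length_eq_dist
        have : (t₁.append (q'.append t₂)).length < p.length := by
          have h1 : p.length = t₁.length + (q.length + t₂.length) := by
            rw [← hspec1, ← hspec2]; simp [Walk.length_append]
          simp [Walk.length_append, h1, hq']
          omega
        have := SimpleGraph.dist_le (t₁.append (q'.append t₂))
        omega
      · exact heq.symm
    -- minimality: P u w is ≤ q, and also q ≤ P u w
    have h1 : (P u w hr).support ≤ q.support := Pmin u w hr q hqlen
    have h2 : ¬ ((P u w hr).support < q.support) := by
      intro hlt
      set r := P u w hr with hrr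
      -- build the competing walk
      set p' := t₁.append (r.append t₂) with hp'
      have hp'len : p'.length = G.dist a b := by
        have h1 : p.length = t₁.length + (q.length + t₂.length) := by
          rw [← hspec1, ← hspec2]; simp [Walk.length_append]
        have : p'.length = t₁.length + (r.length + t₂.length) := by
          simp [hp', Walk.length_append]
        rw [this, Plen u w hr, ← hqlen]
        omega
      have hmin := Pmin a b h p' hp'len
      -- but p'.support < p.support
      have hlt' : p'.support < p.support := by
        have hsp : p.support = t₁.support ++ (q.support.tail ++ t₂.support.tail) := by
          conv_lhs => rw [← hspec1]
          rw [Walk.support_append, ← hspec2, Walk.support_append,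
            List.tail_append_of_ne_nil (Walk.support_ne_nil q)]
        have hsp' : p'.support = t₁.support ++ (r.support.tail ++ t₂.support.tail) := by
          rw [hp', Walk.support_append, Walk.support_append,
            List.tail_append_of_ne_nil (Walk.support_ne_nil r)]
        rw [hsp, hsp']
        -- r.support and q.support both start with u and have equal length
        have hlen : r.support.length = q.support.length := by
          rw [Walk.length_support, Walk.length_support, Plen u w hr, hqlen]
        -- from r.support < q.support, with equal heads u, get tails lex
        have hru : r.support = u :: r.support.tail := Walk.support_eq_cons r
        have hqu : q.support = u :: q.support.tail := Walk.support_eq_cons q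
        have hlex : List.Lex (· < ·) r.support q.support := hlt
        rw [hru, hqu] at hlex
        have htail : List.Lex (· < ·) r.support.tail q.support.tail := by
          cases hlex with
          | cons h => exact h
          | rel h => exact absurd h (lt_irrefl u)
        have htlen : r.support.tail.length = q.support.tail.length := by
          rw [hru, hqu] at hlen; simpa using hlen
        exact lex_append_prefix t₁.support
          (lex_append_of_length_eq htail htlen t₂.support.tail t₂.support.tail)
      exact absurd hmin (not_le_of_gt hlt')
    have hsup : q.support = (P u w hr).support := le_antisymm (not_lt.mp h2) h1
    exact walk_eq_of_support_eq' q (P u w hr) hsup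
  refine ⟨P, Plen, ?_⟩
  intro a₁ b₁ h₁ a₂ b₂ h₂ u w hu₁ hw₁ hu₂ hw₂
  have hr : G.Reachable u w :=
    ⟨(((P a₁ b₁ h₁).dropUntil u hu₁).takeUntil w hw₁)⟩
  rw [main a₁ b₁ h₁ u w hu₁ hw₁ hr, main a₂ b₂ h₂ u w hu₂ hw₂ hr]
end

section
/- Let P_ε be a set of shortest paths containing one shortest path for every vertex pair at distance exactly ε in G, and let P*_ε be the collection of their interiors (each path with its two endpoints removed, viewed as vertex sets; each interior has ε−1 vertices). If V* ⊆ V is an ((ε−1)/|V|)-net for the set system (V, P*_ε), then V* is a gate-vertex set of G with parameter ε. -/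
/-- **An `((ε−1)/|V|)`-net of path interiors is a gate-vertex set.** Let `P` choose,
for every pair of vertices at distance exactly `ε`, one shortest path between them.
If `S` is an `((ε−1)/|V|)`-net for the system of interiors of these paths (each path
with its two endpoints removed, viewed as a vertex set), i.e. `S` meets every interior
whose cardinality is at least `((ε−1)/|V|)·|V|`, then `S` is a gate-vertex set:
every pair at distance `ε` is covered by some vertex of `S`. -/
theorem net_isGateSet
    {V : Type*} [Fintype V] [DecidableEq V] (G : SimpleGraph V)
    (ε : ℕ) (hε : 2 ≤ ε)
    (P : ∀ u v : V, G.dist u v = ε → G.Walk u v)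
    (hlen : ∀ u v h, (P u v h).length = ε)
    (S : Set V)
    (hnet : ∀ u v (h : G.dist u v = ε),
      ((ε : ℚ) - 1) / (Fintype.card V) * (Fintype.card V) ≤
          ((P u v h).support.tail.dropLast).toFinset.card →
        ∃ x ∈ S, x ∈ (P u v h).support.tail.dropLast) :
    ∀ u v : V, G.dist u v = ε →
      ∃ x ∈ S, G.dist u x + G.dist x v = G.dist u v := by
  intro u v h
  have hn0 : (Fintype.card V : ℚ) ≠ 0 :=
    Nat.cast_ne_zero.mpr (Fintype.card_pos_iff.mpr ⟨u⟩).ne'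
  set w := P u v h with hw
  have hpath : w.IsPath := w.isPath_of_length_eq_dist (by rw [hlen, h])
  have hnodup : (w.support.tail.dropLast).Nodup :=
    ((List.dropLast_sublist _).trans (List.tail_sublist _)).nodup hpath.support_nodup
  have hsup : w.support.length = ε + 1 := by
    rw [SimpleGraph.Walk.length_support, hlen]
  have hcard : (w.support.tail.dropLast).toFinset.card = ε - 1 := by
    rw [List.toFinset_card_of_nodup hnodup, List.length_dropLast, List.length_tail, hsup]
    omega
  obtain ⟨x, hxS, hxmem⟩ := hnet u v h (by
    rw [div_mul_cancel₀ _ hn0, hcard]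
    have : ((ε - 1 : ℕ) : ℚ) = (ε : ℚ) - 1 := by
      push_cast [Nat.cast_sub (by omega : 1 ≤ ε)]; ring
    rw [this])
  refine ⟨x, hxS, ?_⟩
  have hxsup : x ∈ w.support :=
    List.mem_of_mem_tail (List.dropLast_sublist _ |>.mem hxmem)
  have hsplit := congr_arg SimpleGraph.Walk.length (w.take_spec hxsup)
  rw [SimpleGraph.Walk.length_append] at hsplit
  have h1 : G.dist u x ≤ (w.takeUntil x hxsup).length := SimpleGraph.dist_le _
  have h2 : G.dist x v ≤ (w.dropUntil x hxsup).length := SimpleGraph.dist_le _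
  have h3 : G.dist u v ≤ G.dist u x + G.dist x v := by
    obtain ⟨p, hp⟩ := (SimpleGraph.Walk.reachable (w.takeUntil x hxsup)).exists_walk_length_eq_dist
    obtain ⟨q, hq⟩ := (SimpleGraph.Walk.reachable (w.dropUntil x hxsup)).exists_walk_length_eq_dist
    calc G.dist u v ≤ (p.append q).length := SimpleGraph.dist_le _
      _ = _ := by rw [SimpleGraph.Walk.length_append, hp, hq]
  have h4 : w.length = ε := hlen u v h
  omega
end

section
/- There exists a graph G and parameter ε for which a gate-vertex set with locality parameter ε = k+1 is not a k-skip cover; i.e., the converse of 'every k-skip cover is a gate-vertex set with ε = k+1' fails. Concretely, for a simple path on 9 vertices with ε = 5, the single middle vertex forms a gate-vertex set, but no single vertex forms a 4-skip cover of the path. -/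
lemma pathGraph_walk_length_ge {n : ℕ} {u v : Fin n} (p : (SimpleGraph.pathGraph n).Walk u v) :
    Nat.dist u.val v.val ≤ p.length := by
  induction p with
  | nil => simp [Nat.dist_self]
  | cons h q ih =>
    rename_i a b c
    have hab : Nat.dist a.val b.val = 1 := by
      rcases (SimpleGraph.pathGraph_adj.mp h) with h1 | h1 <;>
        simp [Nat.dist, ← h1]
    calc Nat.dist a.val c.val ≤ Nat.dist a.val b.val + Nat.dist b.val c.val :=
          Nat.dist.triangle_inequality _ _ _
      _ ≤ 1 + q.length := by rw [hab]; exact Nat.add_le_add_left ih 1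
      _ = (SimpleGraph.Walk.cons h q).length := by simp [Nat.add_comm]

lemma pathGraph_walk_exists {n : ℕ} (k : ℕ) : ∀ u v : Fin n, v.val = u.val + k →
    ∃ p : (SimpleGraph.pathGraph n).Walk u v, p.length = k := by
  induction k with
  | zero =>
    intro u v h
    have : u = v := Fin.ext (by omega)
    subst this
    exact ⟨SimpleGraph.Walk.nil, rfl⟩
  | succ k ih =>
    intro u v h
    have hu1 : u.val + 1 < n := by have := v.isLt; omega
    set w : Fin n := ⟨u.val + 1, hu1⟩ with hw
    have hadj : (SimpleGraph.pathGraph n).Adj u w := by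
      rw [SimpleGraph.pathGraph_adj]; left; rfl
    obtain ⟨q, hq⟩ := ih w v (by simp [hw]; omega)
    exact ⟨SimpleGraph.Walk.cons hadj q, by simp [hq]⟩

lemma pathGraph_dist {n : ℕ} (u v : Fin n) :
    (SimpleGraph.pathGraph n).dist u v = Nat.dist u.val v.val := by
  rcases le_total u.val v.val with h | h
  · obtain ⟨p, hp⟩ := pathGraph_walk_exists (v.val - u.val) u v (by omega)
    have h1 := SimpleGraph.dist_le p
    obtain ⟨q, hq⟩ := SimpleGraph.Reachable.exists_walk_length_eq_dist
      (⟨p⟩ : SimpleGraph.Reachable _ u v)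
    have h2 := pathGraph_walk_length_ge q
    have : Nat.dist u.val v.val = v.val - u.val := by simp [Nat.dist]; omega
    omega
  · obtain ⟨p, hp⟩ := pathGraph_walk_exists (u.val - v.val) v u (by omega)
    have h1 := SimpleGraph.dist_le p.reverse
    rw [SimpleGraph.Walk.length_reverse] at h1
    obtain ⟨q, hq⟩ := SimpleGraph.Reachable.exists_walk_length_eq_dist
      (⟨p.reverse⟩ : SimpleGraph.Reachable _ u v)
    have h2 := pathGraph_walk_length_ge q
    have : Nat.dist u.val v.val = u.val - v.val := by simp [Nat.dist]; omega
    omega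

/-- The converse of “every `k`-skip cover is a gate-vertex set with `ε = k+1`” fails:
on the simple path with 9 vertices and `ε = 5`, the middle vertex `4` alone is a
gate-vertex set, yet no single vertex is a `4`-skip cover. -/
theorem gateSet_not_kSkipCover :
    (∀ u v : Fin 9, (SimpleGraph.pathGraph 9).dist u v = 5 →
      ∃ x ∈ ({(4 : Fin 9)} : Set (Fin 9)),
        (SimpleGraph.pathGraph 9).dist u x + (SimpleGraph.pathGraph 9).dist x v =
          (SimpleGraph.pathGraph 9).dist u v) ∧
    (∀ y : Fin 9, ¬ IsKSkipCover (SimpleGraph.pathGraph 9) 4 {y}) := by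
  constructor
  · intro u v h
    refine ⟨4, rfl, ?_⟩
    rw [pathGraph_dist] at h ⊢
    rw [pathGraph_dist, pathGraph_dist]
    simp only [Nat.dist] at *
    have h4 : ((4 : Fin 9) : ℕ) = 4 := rfl
    rw [h4]
    omega
  · intro y hy
    have hreach : (SimpleGraph.pathGraph 9).Reachable 0 8 :=
      ((SimpleGraph.pathGraph_connected 8).preconnected) 0 8
    obtain ⟨p, hlen, hp⟩ := hy 0 8 hreach
    have hdist : (SimpleGraph.pathGraph 9).dist 0 8 = 8 := by
      rw [pathGraph_dist]; rfl
    have hlen8 : p.length = 8 := by rw [hlen, hdist]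
    have hpath : p.IsPath := p.isPath_of_length_eq_dist hlen
    have hnd : p.support.Nodup := hpath.support_nodup
    have hsl : p.support.length = 9 := by
      rw [SimpleGraph.Walk.length_support, hlen8]
    set l := p.support with hl
    by_cases hy4 : y ∈ l.take 4
    · have hsplit : l = l.take 4 ++ (l.drop 4).take 4 ++ (l.drop 4).drop 4 := by
        rw [List.append_assoc, List.take_append_drop, List.take_append_drop]
      obtain ⟨x, hx1, hx2⟩ := hp _ _ _ hsplit (by
        rw [List.length_take, List.length_drop, hsl]; rfl)
      rw [Set.mem_singleton_iff] at hx2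
      subst hx2
      have h' : (l.take 4 ++ l.drop 4).Nodup := by rw [List.take_append_drop]; exact hnd
      have hdisj := (List.nodup_append'.mp h').2.2
      exact hdisj hy4 ((List.take_subset 4 _) hx1)
    · obtain ⟨x, hx1, hx2⟩ := hp [] (l.take 4) (l.drop 4) (by
        simp [List.take_append_drop]) (by rw [List.length_take, hsl]; rfl)
      rw [Set.mem_singleton_iff] at hx2
      subst hx2
      exact hy4 hx1
end

section
/- In BFS level computation from a source u: if d(u,v) ≥ 2, then the set I(v) of all internal vertices appearing on at least one shortest path from u to v satisfies I(v) = ⋃_{(z,v)∈E, d(u,z)+1=d(u,v)} (I(z) ∪ {z}), where for neighbors z of u (d(u,z)=1) we set I(z)=∅. -/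
/-- The set of internal vertices of shortest `u`–`v` paths. -/
def internals {V : Type*} (G : SimpleGraph V) (u v : V) : Set V :=
  {x | x ≠ u ∧ x ≠ v ∧ G.dist u x + G.dist x v = G.dist u v}

/-- **BFS recursion for internal vertices of shortest paths.** If `d(u,v) ≥ 2`, then
`I(v) = ⋃_{(z,v) ∈ E, d(u,z)+1=d(u,v)} (I(z) ∪ {z})`, where `I(w)` is the set of
internal vertices of shortest `u`–`w` paths (so `I(z) = ∅` for neighbors `z` of `u`). -/
theorem internals_recursion
    {V : Type*} [Fintype V] (G : SimpleGraph V) (u v : V)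
    (h2 : 2 ≤ G.dist u v) :
    internals G u v =
      ⋃ z ∈ {z : V | G.Adj z v ∧ G.dist u z + 1 = G.dist u v},
        (internals G u z ∪ {z}) := by
  have huv : G.Reachable u v := SimpleGraph.Reachable.of_dist_ne_zero (by omega)
  ext x
  simp only [Set.mem_iUnion, Set.mem_setOf_eq, Set.mem_union, Set.mem_singleton_iff]
  constructor
  · rintro ⟨hxu, hxv, hsum⟩
    -- show d(u,x) and d(x,v) are positive
    have hux : 0 < G.dist u x := by
      by_contra h
      have h0 : G.dist u x = 0 := by omega
      have hxvpos : G.dist x v = G.dist u v := by omega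
      have : G.Reachable x v := SimpleGraph.Reachable.of_dist_ne_zero (by omega)
      have : G.Reachable u x := huv.trans this.symm
      have := this.dist_eq_zero_iff.mp h0
      exact hxu this.symm
    have hxvpos : 0 < G.dist x v := by
      by_contra h
      have h0 : G.dist x v = 0 := by omega
      have : G.Reachable u x := SimpleGraph.Reachable.of_dist_ne_zero (by omega)
      have : G.Reachable x v := this.symm.trans huv
      exact hxv (this.dist_eq_zero_iff.mp h0)
    have hrux : G.Reachable u x := SimpleGraph.Reachable.of_dist_ne_zero (by omega)
    have hrxv : G.Reachable x v := SimpleGraph.Reachable.of_dist_ne_zero (by omega)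
    obtain ⟨p, hp⟩ := hrxv.exists_walk_length_eq_dist
    -- take the last edge of p
    cases hpr : p.reverse with
    | nil =>
        exfalso
        have : p.length = 0 := by
          have := congrArg SimpleGraph.Walk.length hpr
          simpa using this
        omega
    | cons hadj q =>
        rename_i z
        -- hadj : G.Adj v z, q : G.Walk z x
        have hql : q.length = G.dist x v - 1 := by
          have := congrArg SimpleGraph.Walk.length hpr
          simp at this
          omega
        have hxz : G.dist x z ≤ G.dist x v - 1 := by
          have := SimpleGraph.dist_le q.reverse
          simpa [hql] using this
        have hzv : G.dist z v = 1 := SimpleGraph.dist_eq_one_iff_adj.mpr hadj.symm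
        have hrzv : G.Reachable z v := hadj.symm.reachable
        have hruz : G.Reachable u z := huv.trans hrzv.symm
        have hrxz : G.Reachable x z := hrxv.trans hrzv.symm
        have htri1 : G.dist u z ≤ G.dist u x + G.dist x z := dist_tri hrux hrxz
        have htri2 : G.dist u v ≤ G.dist u z + G.dist z v := dist_tri hruz hrzv
        have hkey : G.dist u z + 1 = G.dist u v := by omega
        refine ⟨z, ⟨hadj.symm, hkey⟩, ?_⟩
        by_cases hxz' : x = z
        · right; exact hxz'
        · left
          refine ⟨hxu, hxz', ?_⟩
          omega
  · rintro ⟨z, ⟨hadj, hz⟩, hx⟩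
    have hzv : G.dist z v = 1 := SimpleGraph.dist_eq_one_iff_adj.mpr hadj
    have hruz : G.Reachable u z := SimpleGraph.Reachable.of_dist_ne_zero (by omega)
    have hrzv : G.Reachable z v := hadj.reachable
    rcases hx with hx | hx
    · obtain ⟨hxu, hxz, hsum⟩ := hx
      have huxpos : 0 < G.dist u x := by
        by_contra h
        have h0 : G.dist u x = 0 := by omega
        have hxz0 : G.dist x z = G.dist u z := by omega
        have hrxz : G.Reachable x z := SimpleGraph.Reachable.of_dist_ne_zero (by omega)
        have : G.Reachable u x := hruz.trans hrxz.symm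
        exact hxu (this.dist_eq_zero_iff.mp h0).symm
      have hrux : G.Reachable u x := SimpleGraph.Reachable.of_dist_ne_zero (by omega)
      have hrxz : G.Reachable x z := hrux.symm.trans hruz
      have hrxv : G.Reachable x v := hrxz.trans hrzv
      have htri1 : G.dist x v ≤ G.dist x z + G.dist z v := dist_tri hrxz hrzv
      have htri2 : G.dist u v ≤ G.dist u x + G.dist x v := dist_tri hrux hrxv
      have hxv : x ≠ v := by
        rintro rfl
        have hc : G.dist x z = G.dist z x := SimpleGraph.dist_comm
        omega
      exact ⟨hxu, hxv, by omega⟩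
    · subst hx
      have hxu : x ≠ u := by
        rintro rfl
        simp [SimpleGraph.dist_self] at hz
        omega
      exact ⟨hxu, hadj.ne, by omega⟩
end
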